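/- There exist d₀ > 0 and a constant κ' < ∞ such that the following holds for every positive integer k, every real β > 1/2, and every 0 < d < d₀: if q is a probability mass function on k-tuples of positive integers all of whose one-dimensional coordinate marginals equal a common pmf p on the positive integers with finite mean μ, and the joint Shannon entropy satisfies H(q) ≥ (1 − d^β)·k·μ, then ∑_{(l₁,…,l_k)} |q(l₁,…,l_k) − 2^{−(l₁+⋯+l_k)}| ≤ κ'·√k·d^{β/2}. -/

import Mathlib

open scoped ENNReal BigOperators
open Real

section Aux

lemma hasSum_of_ofReal_tsum {α : Type*} {f : α → ℝ} {c : ℝ}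
    (hf : ∀ a, 0 ≤ f a) (hc : 0 ≤ c)
    (h : ∑' a, ENNReal.ofReal (f a) = ENNReal.ofReal c) : HasSum f c := by
  have hne : ∑' a, ENNReal.ofReal (f a) ≠ ∞ := by rw [h]; exact ENNReal.ofReal_ne_top
  have hs : Summable f := by
    have := ENNReal.summable_toReal hne
    simpa [ENNReal.toReal_ofReal, hf] using this
  have : ∑' a, f a = c := by
    have h2 := ENNReal.tsum_toReal_eq (f := fun a => ENNReal.ofReal (f a))
      (fun a => ENNReal.ofReal_ne_top)
    rw [h] at h2
    simp only [ENNReal.toReal_ofReal hc] at h2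
    rw [h2]
    exact tsum_congr fun a => (ENNReal.toReal_ofReal (hf a)).symm
  exact this ▸ hs.hasSum

lemma hasSum_geom_pnat {θ : ℝ} (h0 : 0 ≤ θ) (h1 : θ < 1) :
    HasSum (fun l : ℕ+ => θ ^ ((l : ℕ) - 1) * (1 - θ)) 1 := by
  have hg : HasSum (fun n : ℕ => θ ^ n * (1 - θ)) 1 := by
    have := (hasSum_geometric_of_lt_one h0 h1).mul_right (1 - θ)
    rwa [inv_mul_cancel₀ (by linarith : (1:ℝ) - θ ≠ 0)] at this
  have : HasSum (fun n : ℕ => θ ^ ((Equiv.pnatEquivNat.symm n : ℕ) - 1) * (1 - θ)) 1 := by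
    have hval : ∀ n : ℕ, ((Equiv.pnatEquivNat.symm n : ℕ+) : ℕ) - 1 = n := by
      intro n; simp [Equiv.pnatEquivNat, Nat.succPNat]
    simp only [hval]; exact hg
  exact Equiv.pnatEquivNat.symm.hasSum_iff.mp this

lemma tsum_pi_prod (f : ℕ+ → ℝ≥0∞) : ∀ k : ℕ,
    ∑' t : Fin k → ℕ+, ∏ i, f (t i) = (∑' l, f l) ^ k := by
  intro k
  induction k with
  | zero =>
    rw [tsum_eq_single (default : Fin 0 → ℕ+) (fun b hb => absurd (Subsingleton.elim b default) hb)]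
    simp
  | succ n ih =>
    rw [← (Fin.consEquiv (fun _ : Fin (n+1) => ℕ+)).tsum_eq]
    have : ∀ p : ℕ+ × (Fin n → ℕ+), (∏ i, f ((Fin.consEquiv (fun _ : Fin (n+1) => ℕ+)) p i))
        = f p.1 * ∏ i, f (p.2 i) := by
      intro p
      rw [Fin.prod_univ_succ]
      simp [Fin.consEquiv]
    rw [tsum_congr this, ENNReal.tsum_prod']
    simp_rw [ENNReal.tsum_mul_left, ENNReal.tsum_mul_right]
    rw [ih, pow_succ]
    ring

lemma hasSum_pi_prod {k : ℕ} {f : ℕ+ → ℝ} (hf0 : ∀ l, 0 ≤ f l) (hf1 : HasSum f 1) :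
    HasSum (fun t : Fin k → ℕ+ => ∏ i, f (t i)) 1 := by
  apply hasSum_of_ofReal_tsum (fun t => Finset.prod_nonneg fun i _ => hf0 (t i)) zero_le_one
  have h1 : ∀ t : Fin k → ℕ+, ENNReal.ofReal (∏ i, f (t i)) = ∏ i, ENNReal.ofReal (f (t i)) :=
    fun t => ENNReal.ofReal_prod_of_nonneg fun i _ => hf0 (t i)
  rw [tsum_congr h1, tsum_pi_prod (fun l => ENNReal.ofReal (f l)) k,
    ← ENNReal.ofReal_tsum_of_nonneg hf0 hf1.summable, hf1.tsum_eq]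
  simp

lemma prod_geom_eq {k : ℕ} (t : Fin k → ℕ+) :
    (∏ i, (1/2 : ℝ) ^ ((t i : ℕ) - 1) * (1 - 1/2)) = (2:ℝ) ^ (-((∑ i, (t i : ℕ) : ℕ) : ℤ)) := by
  have h1 : (∏ i, (1/2 : ℝ) ^ ((t i : ℕ) - 1) * (1 - 1/2))
      = (1/2 : ℝ) ^ (∑ i, ((t i : ℕ) - 1)) * (1/2) ^ k := by
    rw [Finset.prod_mul_distrib, Finset.prod_pow_eq_pow_sum]
    norm_num
    rw [one_div, inv_pow]
  have h2 : (∑ i, ((t i : ℕ) - 1)) + k = ∑ i, (t i : ℕ) := by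
    calc (∑ i, ((t i : ℕ) - 1)) + k = (∑ i, ((t i : ℕ) - 1)) + ∑ _i : Fin k, 1 := by simp
      _ = ∑ i : Fin k, (((t i : ℕ) - 1) + 1) := by rw [← Finset.sum_add_distrib]
      _ = ∑ i, (t i : ℕ) :=
          Finset.sum_congr rfl fun i _ => Nat.sub_add_cancel (t i).property
  rw [h1, ← pow_add, h2, zpow_neg, zpow_natCast, one_div, inv_pow]

lemma hasSum_m {k : ℕ} :
    HasSum (fun t : Fin k → ℕ+ => (2:ℝ) ^ (-((∑ i, (t i : ℕ) : ℕ) : ℤ))) 1 := by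
  have := hasSum_pi_prod (k := k) (f := fun l : ℕ+ => (1/2 : ℝ) ^ ((l : ℕ) - 1) * (1 - 1/2))
    (fun l => by positivity) (hasSum_geom_pnat (by norm_num) (by norm_num))
  simpa only [prod_geom_eq] using this

lemma log_prod_geom {k : ℕ} {θ : ℝ} (hθ0 : 0 < θ) (hθ1 : θ < 1) (t : Fin k → ℕ+) :
    Real.log (∏ i, θ ^ ((t i : ℕ) - 1) * (1 - θ))
      = (((∑ i, (t i : ℕ) : ℕ) : ℝ) - k) * Real.log θ + k * Real.log (1 - θ) := by
  have h1θ : (0:ℝ) < 1 - θ := by linarith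
  rw [Real.log_prod (s := Finset.univ) (f := fun i => θ ^ ((t i : ℕ) - 1) * (1 - θ))
    (fun i _ => (mul_pos (pow_pos hθ0 _) h1θ).ne')]
  have : ∀ i : Fin k, Real.log (θ ^ ((t i : ℕ) - 1) * (1 - θ))
      = (((t i : ℕ) : ℝ) - 1) * Real.log θ + Real.log (1 - θ) := by
    intro i
    rw [Real.log_mul (by positivity) (ne_of_gt h1θ), Real.log_pow,
      Nat.cast_sub (show 1 ≤ (t i : ℕ) from (t i).property)]
    push_cast
    ring
  rw [Finset.sum_congr rfl fun i _ => this i, Finset.sum_add_distrib, Finset.sum_const,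
    Finset.card_univ, Fintype.card_fin, ← Finset.sum_mul, nsmul_eq_mul]
  congr 1
  rw [Finset.sum_sub_distrib, Finset.sum_const, Finset.card_univ, Fintype.card_fin]
  push_cast
  ring

lemma mean_machinery {k : ℕ} (hk : 0 < k) (q : (Fin k → ℕ+) → ℝ) (p : ℕ+ → ℝ)
    (hq0 : ∀ t, 0 ≤ q t) (hqsum : Summable q) (hq1 : ∑' t, q t = 1)
    (hmar : ∀ (i : Fin k) (a : ℕ+), (∑' t : Fin k → ℕ+, if t i = a then q t else 0) = p a)
    (hp0 : ∀ a, 0 ≤ p a)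
    (hpsum : Summable fun l : ℕ+ => (l : ℝ) * p l) :
    HasSum (fun t : Fin k → ℕ+ => q t * ((∑ i, (t i : ℕ) : ℕ) : ℝ))
      ((k : ℝ) * ∑' l : ℕ+, (l : ℝ) * p l) ∧ HasSum p 1 := by
  set μ := ∑' l : ℕ+, (l : ℝ) * p l with hμ
  have hμ0 : 0 ≤ μ := tsum_nonneg fun l => mul_nonneg (Nat.cast_nonneg _) (hp0 l)
  set Q : (Fin k → ℕ+) → ℝ≥0∞ := fun t => ENNReal.ofReal (q t) with hQ
  have hQ1 : ∑' t, Q t = 1 := by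
    rw [hQ, ← ENNReal.ofReal_tsum_of_nonneg hq0 hqsum, hq1, ENNReal.ofReal_one]
  have hitesum : ∀ (i : Fin k) (a : ℕ+),
      Summable (fun t : Fin k → ℕ+ => if t i = a then q t else 0) := fun i a =>
    Summable.of_nonneg_of_le (fun t => by split_ifs; exacts [hq0 t, le_refl 0])
      (fun t => by split_ifs; exacts [le_refl _, hq0 t]) hqsum
  have hQmar : ∀ (i : Fin k) (a : ℕ+),
      (∑' t : Fin k → ℕ+, if t i = a then Q t else 0) = ENNReal.ofReal (p a) := by
    intro i a
    rw [← hmar i a, ENNReal.ofReal_tsum_of_nonneg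
      (fun t => by split_ifs; exacts [hq0 t, le_refl 0]) (hitesum i a)]
    refine tsum_congr fun t => ?_
    split_ifs <;> simp [hQ]
  have hQi : ∀ i : Fin k, ∑' t : Fin k → ℕ+, Q t * ((t i : ℕ) : ℝ≥0∞) = ENNReal.ofReal μ := by
    intro i
    have step1 : ∀ t : Fin k → ℕ+, Q t * ((t i : ℕ) : ℝ≥0∞)
        = ∑' a : ℕ+, (if t i = a then Q t * ((a : ℕ) : ℝ≥0∞) else 0) := by
      intro t
      rw [tsum_eq_single (t i) (fun b hb => if_neg (Ne.symm hb)), if_pos rfl]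
    calc ∑' t : Fin k → ℕ+, Q t * ((t i : ℕ) : ℝ≥0∞)
        = ∑' (t : Fin k → ℕ+) (a : ℕ+), (if t i = a then Q t * ((a : ℕ) : ℝ≥0∞) else 0) :=
          tsum_congr step1
      _ = ∑' (a : ℕ+) (t : Fin k → ℕ+), (if t i = a then Q t * ((a : ℕ) : ℝ≥0∞) else 0) :=
          ENNReal.tsum_comm
      _ = ∑' a : ℕ+, ((a : ℕ) : ℝ≥0∞) * ∑' t : Fin k → ℕ+, (if t i = a then Q t else 0) := by
          refine tsum_congr fun a => ?_
          rw [← ENNReal.tsum_mul_left]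
          refine tsum_congr fun t => ?_
          split_ifs <;> simp [mul_comm]
      _ = ∑' a : ℕ+, ENNReal.ofReal ((a : ℝ) * p a) := by
          refine tsum_congr fun a => ?_
          rw [hQmar i a, ENNReal.ofReal_mul (Nat.cast_nonneg _), ENNReal.ofReal_natCast]
      _ = ENNReal.ofReal μ := by
          rw [hμ, ENNReal.ofReal_tsum_of_nonneg
            (fun a => mul_nonneg (Nat.cast_nonneg _) (hp0 a)) hpsum]
  constructor
  · apply hasSum_of_ofReal_tsum (fun t => mul_nonneg (hq0 t) (Nat.cast_nonneg _))
      (mul_nonneg (Nat.cast_nonneg _) hμ0)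
    calc ∑' t : Fin k → ℕ+, ENNReal.ofReal (q t * ((∑ i, (t i : ℕ) : ℕ) : ℝ))
        = ∑' t : Fin k → ℕ+, ∑ i, Q t * ((t i : ℕ) : ℝ≥0∞) := by
          refine tsum_congr fun t => ?_
          rw [ENNReal.ofReal_mul (hq0 t), ENNReal.ofReal_natCast, Nat.cast_sum, Finset.mul_sum]
      _ = ∑ i, ∑' t : Fin k → ℕ+, Q t * ((t i : ℕ) : ℝ≥0∞) :=
          Summable.tsum_finsetSum fun i _ => ENNReal.summable
      _ = ENNReal.ofReal ((k : ℝ) * μ) := by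
          rw [Finset.sum_congr rfl fun i _ => hQi i, Finset.sum_const, Finset.card_univ,
            Fintype.card_fin, ENNReal.ofReal_mul (Nat.cast_nonneg _), ENNReal.ofReal_natCast,
            nsmul_eq_mul]
  · apply hasSum_of_ofReal_tsum hp0 zero_le_one
    have i0 : Fin k := ⟨0, hk⟩
    calc ∑' a : ℕ+, ENNReal.ofReal (p a)
        = ∑' (a : ℕ+) (t : Fin k → ℕ+), (if t i0 = a then Q t else 0) := by
          exact tsum_congr fun a => (hQmar i0 a).symm
      _ = ∑' (t : Fin k → ℕ+) (a : ℕ+), (if t i0 = a then Q t else 0) := ENNReal.tsum_comm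
      _ = ∑' t : Fin k → ℕ+, Q t := by
          refine tsum_congr fun t => ?_
          rw [tsum_eq_single (t i0) (fun b hb => if_neg (Ne.symm hb)), if_pos rfl]
      _ = ENNReal.ofReal 1 := by rw [hQ1, ENNReal.ofReal_one]

lemma gibbs_pt {a b : ℝ} (ha : 0 ≤ a) (hb : 0 < b) :
    0 ≤ a * log a - a * log b - a + b := by
  rcases eq_or_lt_of_le ha with h | h
  · simp [← h]; linarith
  · have hlog : log b - log a ≤ b / a - 1 := by
      have := Real.log_le_sub_one_of_pos (div_pos hb h)
      rwa [Real.log_div (ne_of_gt hb) (ne_of_gt h)] at this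
    have : a * (log b - log a) ≤ a * (b / a - 1) := by
      exact mul_le_mul_of_nonneg_left hlog ha
    have h2 : a * (b / a - 1) = b - a := by field_simp
    nlinarith

lemma hellinger_pt {a b : ℝ} (ha : 0 ≤ a) (hb : 0 < b) :
    (Real.sqrt a - Real.sqrt b) ^ 2 ≤ a * log a - a * log b - a + b := by
  rcases eq_or_lt_of_le ha with h | h
  · rw [← h]; rw [Real.sqrt_zero]
    have := Real.sq_sqrt hb.le
    simp [this]
  · set x := Real.sqrt a with hx
    set y := Real.sqrt b with hy
    have hx0 : 0 < x := Real.sqrt_pos.mpr h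
    have hy0 : 0 < y := Real.sqrt_pos.mpr hb
    have hxa : x ^ 2 = a := Real.sq_sqrt h.le
    have hyb : y ^ 2 = b := Real.sq_sqrt hb.le
    have hla : log a = 2 * log x := by
      rw [← hxa, Real.log_pow]; push_cast; ring
    have hlb : log b = 2 * log y := by
      rw [← hyb, Real.log_pow]; push_cast; ring
    have key : 1 - y / x ≤ log x - log y := by
      have := Real.log_le_sub_one_of_pos (div_pos hy0 hx0)
      rw [Real.log_div (ne_of_gt hy0) (ne_of_gt hx0)] at this
      linarith
    have key2 : x - y ≤ x * (log x - log y) := by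
      have := mul_le_mul_of_nonneg_left key hx0.le
      have h2 : x * (1 - y / x) = x - y := by field_simp
      linarith
    rw [hla, hlb, ← hxa, ← hyb]
    nlinarith [sq_nonneg (x - y), mul_le_mul_of_nonneg_left key2 (mul_pos hx0 hx0).le]

lemma pinsker_pt {a b lam : ℝ} (ha : 0 ≤ a) (hb : 0 < b) (hl : 0 < lam) :
    |a - b| ≤ lam * (a + b) + (a * log a - a * log b - a + b) / (2 * lam) := by
  have hF := hellinger_pt ha hb
  set x := Real.sqrt a
  set y := Real.sqrt b
  have hx0 : 0 ≤ x := Real.sqrt_nonneg a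
  have hy0 : 0 ≤ y := Real.sqrt_nonneg b
  have hxa : x ^ 2 = a := Real.sq_sqrt ha
  have hyb : y ^ 2 = b := Real.sq_sqrt hb.le
  have habs : |a - b| = |x - y| * (x + y) := by
    rw [← hxa, ← hyb]
    rw [show x^2 - y^2 = (x - y) * (x + y) by ring, abs_mul,
      abs_of_nonneg (add_nonneg hx0 hy0)]
  have key : |a - b| ≤ lam * (a + b) + (x - y)^2 / (2 * lam) := by
    rw [habs, ← hxa, ← hyb,
      show lam * (x^2 + y^2) + (x - y)^2/(2*lam)
        = (2*lam*(lam*(x^2+y^2)) + (x-y)^2)/(2*lam) by field_simp,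
      le_div_iff₀ (by positivity : (0:ℝ) < 2 * lam)]
    nlinarith [sq_nonneg (lam * (x + y) - |x - y|), sq_abs (x - y), abs_nonneg (x - y),
      sq_nonneg (lam * (x - y))]
  have h2 : (x - y)^2 / (2 * lam) ≤ (a * log a - a * log b - a + b) / (2 * lam) := by
    gcongr
  linarith

end Aux



set_option maxHeartbeats 2000000 in
/-- There exist `d₀ > 0` and `κ' < ∞` such that for every positive integer `k`,
every `β > 1/2` and every `0 < d < d₀`: if `q` is a pmf on `k`-tuples of positive
integers all of whose coordinate marginals equal a common pmf `p` with finite mean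
`μ`, and the joint Shannon entropy (in bits) satisfies `H(q) ≥ (1 - d^β)·k·μ`, then
`∑ |q(l₁,…,l_k) - 2^{-(l₁+⋯+l_k)}| ≤ κ'·√k·d^(β/2)`. -/
theorem stmt_5 :
    ∃ d₀ : ℝ, 0 < d₀ ∧ ∃ κ' : ℝ,
      ∀ k : ℕ, 0 < k →
        ∀ β : ℝ, 1 / 2 < β →
          ∀ d : ℝ, 0 < d → d < d₀ →
            ∀ (q : (Fin k → ℕ+) → ℝ) (p : ℕ+ → ℝ),
              (∀ t, 0 ≤ q t) → (∑' t : Fin k → ℕ+, q t = 1) →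
              (∀ (i : Fin k) (a : ℕ+),
                  (∑' t : Fin k → ℕ+, if t i = a then q t else 0) = p a) →
              (Summable fun l : ℕ+ => (l : ℝ) * p l) →
              (1 - d ^ β) * ((k : ℝ) * ∑' l : ℕ+, (l : ℝ) * p l) ≤
                  (∑' t : Fin k → ℕ+, -(q t * Real.logb 2 (q t))) →
                (∑' t : Fin k → ℕ+,
                    |q t - (2 : ℝ) ^ (-((∑ i, (t i : ℕ) : ℕ) : ℤ))|) ≤
                  κ' * Real.sqrt k * d ^ (β / 2) := by
  refine ⟨1/4, by norm_num, 3 * Real.sqrt 28, ?_⟩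
  intro k hk β hβ d hd hdd q p hq0 hq1 hmar hpsum hH
  set μ := ∑' l : ℕ+, (l : ℝ) * p l with hμdef
  set ε := d ^ β with hεdef
  set m : (Fin k → ℕ+) → ℝ := fun t => (2:ℝ) ^ (-((∑ i, (t i : ℕ) : ℕ) : ℤ)) with hmdef
  have hk1 : (1:ℝ) ≤ (k:ℝ) := by exact_mod_cast hk
  have hk0 : (0:ℝ) < (k:ℝ) := by linarith
  have hp0 : ∀ a, 0 ≤ p a := fun a =>
    (hmar ⟨0, hk⟩ a) ▸ tsum_nonneg (fun t => by split_ifs; exacts [hq0 t, le_refl 0])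
  have hqsum : Summable q := by
    by_contra h
    rw [tsum_eq_zero_of_not_summable h] at hq1
    exact one_ne_zero hq1.symm
  have hq1' : HasSum q 1 := hq1 ▸ hqsum.hasSum
  obtain ⟨hqS, hp1⟩ := mean_machinery hk q p hq0 hqsum hq1 hmar hp0 hpsum
  rw [← hμdef] at hqS
  have hμ1 : 1 ≤ μ := by
    have h := Summable.tsum_le_tsum (f := p) (g := fun l : ℕ+ => (l:ℝ) * p l)
      (fun a => le_mul_of_one_le_left (hp0 a) (by exact_mod_cast a.property))
      hp1.summable hpsum
    rwa [hp1.tsum_eq] at h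
  have hμ0 : (0:ℝ) < μ := by linarith
  have hε0 : 0 < ε := Real.rpow_pos_of_pos hd β
  have hε2 : ε ≤ 1/2 := by
    have h1 : d ^ β ≤ (1/4 : ℝ) ^ β := Real.rpow_le_rpow hd.le hdd.le (by linarith)
    have h2 : (1/4 : ℝ) ^ β ≤ (1/4 : ℝ) ^ ((1:ℝ)/2) :=
      Real.rpow_le_rpow_of_exponent_ge (by norm_num) (by norm_num) hβ.le
    have h3 : (1/4 : ℝ) ^ ((1:ℝ)/2) = 1/2 := by
      rw [← Real.sqrt_eq_rpow]
      rw [show (1/4 : ℝ) = (1/2)^2 by norm_num, Real.sqrt_sq (by norm_num)]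
    rw [hεdef]
    linarith
  have hm1 : HasSum m 1 := hasSum_m
  have hm0 : ∀ t, 0 < m t := fun t => by rw [hmdef]; positivity
  have hlogm : ∀ t, Real.log (m t)
      = -(((∑ i, (t i : ℕ) : ℕ) : ℝ)) * Real.log 2 := by
    intro t
    rw [hmdef]
    rw [Real.log_zpow]
    push_cast
    ring
  have hfold : ∀ t : Fin k → ℕ+, (2:ℝ) ^ (-((∑ i, (t i : ℕ) : ℕ) : ℤ)) = m t := by
    intro t; rw [hmdef]
  simp only [hfold]
  clear_value m
  clear hmdef hfold
  by_cases hent : Summable (fun t : Fin k → ℕ+ => -(q t * Real.logb 2 (q t)))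
  case neg =>
    rw [tsum_eq_zero_of_not_summable hent] at hH
    exact absurd hH (not_le.mpr
      (mul_pos (by linarith) (mul_pos hk0 hμ0)))
  case pos =>
  have hlog2 : 0 < Real.log 2 := Real.log_pos one_lt_two
  have hNs : Summable (fun t => q t * Real.log (q t)) := by
    have h := hent.mul_left (-Real.log 2)
    refine h.congr fun t => ?_
    rw [Real.logb]
    field_simp
  set N := ∑' t : Fin k → ℕ+, q t * Real.log (q t) with hNdef
  have hNhas : HasSum (fun t : Fin k → ℕ+ => q t * Real.log (q t)) N := hNs.hasSum
  have hHnat : Real.log 2 * ((1 - ε) * ((k:ℝ) * μ)) ≤ -N := by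
    have hHev : (∑' t : Fin k → ℕ+, -(q t * Real.logb 2 (q t))) = -N / Real.log 2 := by
      have hc : ∀ t : Fin k → ℕ+, -(q t * Real.logb 2 (q t))
          = -(q t * Real.log (q t)) / Real.log 2 := by
        intro t; rw [Real.logb]; field_simp
      rw [tsum_congr hc, tsum_div_const, tsum_neg, hNdef]
    rw [hHev, le_div_iff₀ hlog2] at hH
    nlinarith [hH]
  clear_value N
  clear hNdef hent hH
  clear_value μ ε
  clear hμdef
  -- Gibbs step with geometric reference of parameter θ = μ/(μ+1)
  have h1θ : (1:ℝ) - μ / (μ + 1) = (μ+1)⁻¹ := by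
    field_simp
    ring
  have hθ0 : 0 < μ / (μ + 1) := div_pos hμ0 (by linarith)
  have hθ1 : μ / (μ + 1) < 1 := (div_lt_one (by linarith)).mpr (by linarith)
  obtain ⟨r, hr1, hr0, hqlogr⟩ :
      ∃ r : (Fin k → ℕ+) → ℝ, HasSum r 1 ∧ (∀ t, 0 < r t) ∧
        HasSum (fun t => q t * Real.log (r t))
          (Real.log (μ / (μ+1)) * ((k:ℝ) * μ)
            + ((k:ℝ) * Real.log ((μ+1)⁻¹) - (k:ℝ) * Real.log (μ / (μ+1))) * 1) := by
    refine ⟨fun t => ∏ i, (μ / (μ+1)) ^ ((t i : ℕ) - 1) * (1 - μ / (μ+1)), ?_, ?_, ?_⟩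
    · exact hasSum_pi_prod (f := fun l : ℕ+ => (μ / (μ+1)) ^ ((l : ℕ) - 1) * (1 - μ / (μ+1)))
        (fun l => mul_nonneg (pow_nonneg hθ0.le _) (by linarith)) (hasSum_geom_pnat hθ0.le hθ1)
    · exact fun t => Finset.prod_pos fun i _ => mul_pos (pow_pos hθ0 _) (by linarith)
    · have h := (hqS.mul_left (Real.log (μ / (μ+1)))).add
        (hq1'.mul_left ((k:ℝ) * Real.log ((μ+1)⁻¹) - (k:ℝ) * Real.log (μ / (μ+1))))
      have hfe : ∀ t : Fin k → ℕ+,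
          q t * Real.log (∏ i, (μ / (μ+1)) ^ ((t i : ℕ) - 1) * (1 - μ / (μ+1)))
          = Real.log (μ / (μ+1)) * (q t * ((∑ i, (t i : ℕ) : ℕ) : ℝ))
            + ((k:ℝ) * Real.log ((μ+1)⁻¹) - (k:ℝ) * Real.log (μ / (μ+1))) * q t := by
        intro t
        rw [log_prod_geom hθ0 hθ1 t, h1θ]
        ring
      simpa only [hfe] using h
  -- Gibbs inequality
  have hGibbs : 0 ≤ N - (Real.log (μ / (μ+1)) * ((k:ℝ) * μ)
      + ((k:ℝ) * Real.log ((μ+1)⁻¹) - (k:ℝ) * Real.log (μ / (μ+1))) * 1) - 1 + 1 := by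
    have hsum := ((hNhas.sub hqlogr).sub hq1').add hr1
    rw [← hsum.tsum_eq]
    exact tsum_nonneg fun t => gibbs_pt (hq0 t) (hr0 t)
  -- bound -N
  have hlogθ : Real.log (μ / (μ+1)) = Real.log μ - Real.log (μ+1) :=
    Real.log_div hμ0.ne' (by linarith)
  have hloginv : Real.log ((μ+1)⁻¹) = -Real.log (μ+1) := Real.log_inv _
  have hA : Real.log (μ+1) - Real.log μ ≤ 1/μ := by
    have h := Real.log_le_sub_one_of_pos (show (0:ℝ) < (μ+1)/μ by positivity)
    rw [Real.log_div (by linarith) hμ0.ne'] at h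
    have h2 : (μ+1)/μ - 1 = 1/μ := by field_simp; ring
    linarith
  have hd1 : 0 ≤ Real.log (μ+1) - Real.log μ := by
    have := Real.log_le_log hμ0 (by linarith : μ ≤ μ + 1)
    linarith
  have hs0 : 0 ≤ Real.sqrt (μ+1) := Real.sqrt_nonneg _
  have hs2 : Real.sqrt (μ+1) ^ 2 = μ + 1 := Real.sq_sqrt (by linarith)
  have hB : Real.log (μ+1) ≤ 2 * Real.sqrt (μ+1) := by
    have h1 := Real.log_sqrt (show (0:ℝ) ≤ μ+1 by linarith)
    have h2 := Real.log_le_sub_one_of_pos (Real.sqrt_pos.mpr (show (0:ℝ) < μ+1 by linarith))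
    linarith
  have hkey : (μ-1) * (Real.log (μ+1) - Real.log μ) ≤ 1 := by
    have h1 := mul_le_mul_of_nonneg_left hA (by linarith : (0:ℝ) ≤ μ - 1)
    have h2 : (μ-1) * (1/μ) ≤ 1 := by
      rw [mul_one_div, div_le_one hμ0]
      linarith
    linarith
  have hNbound : -N ≤ (k:ℝ) * (1 + 2 * Real.sqrt (μ+1)) := by
    have hX : -(Real.log (μ / (μ+1)) * ((k:ℝ) * μ)
        + ((k:ℝ) * Real.log ((μ+1)⁻¹) - (k:ℝ) * Real.log (μ / (μ+1))) * 1)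
        = (k:ℝ) * ((μ-1)*(Real.log (μ+1) - Real.log μ) + Real.log (μ+1)) := by
      rw [hlogθ, hloginv]
      ring
    have h2 : (k:ℝ) * ((μ-1)*(Real.log (μ+1) - Real.log μ) + Real.log (μ+1))
        ≤ (k:ℝ) * (1 + 2 * Real.sqrt (μ+1)) :=
      mul_le_mul_of_nonneg_left (by linarith) hk0.le
    linarith
  -- bound μ ≤ 40
  have hμ40 : μ ≤ 40 := by
    have hdiv : Real.log 2 * ((1 - ε) * μ) ≤ 1 + 2 * Real.sqrt (μ+1) := by
      by_contra hcon
      push_neg at hcon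
      have := mul_lt_mul_of_pos_left hcon hk0
      nlinarith [hHnat, hNbound]
    have e1 : Real.log 2 * ((1/2) * μ) ≤ Real.log 2 * ((1 - ε) * μ) := by
      have : 0 ≤ Real.log 2 * (((1 - ε) - 1/2) * μ) :=
        mul_nonneg hlog2.le (mul_nonneg (by linarith) hμ0.le)
      nlinarith [this]
    have hlog2lb := Real.log_two_gt_d9
    nlinarith [hs2, hs0, sq_nonneg (Real.sqrt (μ+1) - 7), e1, hdiv, hμ0]
  -- Pinsker summation
  have hlam0 : (0:ℝ) < Real.sqrt (28 * k * ε) := Real.sqrt_pos.mpr (by positivity)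
  set lam := Real.sqrt (28 * k * ε) with hlamdef
  have hqlogm : HasSum (fun t => q t * Real.log (m t)) (-Real.log 2 * ((k:ℝ) * μ)) := by
    have h := hqS.mul_left (-Real.log 2)
    have hfe : ∀ t : Fin k → ℕ+, q t * Real.log (m t)
        = -Real.log 2 * (q t * ((∑ i, (t i : ℕ) : ℕ) : ℝ)) := by
      intro t
      rw [hlogm t]
      ring
    simpa only [hfe] using h
  have hRHS : HasSum (fun t => lam * (q t + m t)
      + (q t * Real.log (q t) - q t * Real.log (m t) - q t + m t) / (2*lam))
      (lam * (1 + 1) + (N - (-Real.log 2 * ((k:ℝ) * μ)) - 1 + 1) / (2*lam)) :=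
    ((hq1'.add hm1).mul_left lam).add
      ((((hNhas.sub hqlogm).sub hq1').add hm1).div_const (2*lam))
  have hLHS : Summable (fun t : Fin k → ℕ+ => |q t - m t|) := (hqsum.sub hm1.summable).abs
  have hmain : (∑' t : Fin k → ℕ+, |q t - m t|)
      ≤ lam * (1 + 1) + (N - (-Real.log 2 * ((k:ℝ) * μ)) - 1 + 1) / (2*lam) := by
    rw [← hRHS.tsum_eq]
    exact Summable.tsum_le_tsum (fun t => pinsker_pt (hq0 t) (hm0 t) hlam0) hLHS hRHS.summable
  -- numeric finish
  have hlog2ub := Real.log_two_lt_d9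
  have hnum : N - (-Real.log 2 * ((k:ℝ) * μ)) - 1 + 1 ≤ 28 * k * ε := by
    have s1 : N + Real.log 2 * ((k:ℝ) * μ) ≤ Real.log 2 * ε * ((k:ℝ) * μ) := by
      nlinarith [hHnat]
    have s2 : Real.log 2 * μ ≤ 28 := by nlinarith [hμ40, hμ1, hlog2, hlog2ub]
    have s3 : Real.log 2 * ε * ((k:ℝ) * μ) ≤ 28 * k * ε := by
      have h4 : 0 ≤ ε * (k:ℝ) := mul_nonneg hε0.le hk0.le
      nlinarith [mul_le_mul_of_nonneg_left s2 h4]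
    linarith
  have hlamsq : lam ^ 2 = 28 * k * ε := Real.sq_sqrt (by positivity)
  have hfinal1 : (∑' t : Fin k → ℕ+, |q t - m t|) ≤ 2 * lam + lam / 2 := by
    have h5 : (N - (-Real.log 2 * ((k:ℝ) * μ)) - 1 + 1) / (2*lam) ≤ (28*k*ε) / (2*lam) := by
      apply div_le_div_of_nonneg_right hnum (by positivity)
    have h6 : (28*k*ε) / (2*lam) = lam / 2 := by
      rw [← hlamsq]
      field_simp
    linarith [hmain]
  -- identify lam
  have hlameq : lam = Real.sqrt 28 * Real.sqrt k * d ^ (β/2) := by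
    have h7 : Real.sqrt ε = d ^ (β/2) := by
      rw [hεdef, Real.sqrt_eq_rpow, ← Real.rpow_mul hd.le]
      congr 1
      ring
    rw [hlamdef, show (28:ℝ) * k * ε = 28 * ((k:ℝ) * ε) by ring, Real.sqrt_mul (by norm_num),
      Real.sqrt_mul (Nat.cast_nonneg k), h7]
    ring
  have hsk : 0 ≤ Real.sqrt 28 * Real.sqrt k * d ^ (β/2) := by positivity
  calc (∑' t : Fin k → ℕ+, |q t - m t|) ≤ 2 * lam + lam / 2 := hfinal1
    _ = (5/2) * (Real.sqrt 28 * Real.sqrt k * d ^ (β/2)) := by rw [hlameq]; ring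
    _ ≤ 3 * Real.sqrt 28 * Real.sqrt k * d ^ (β/2) := by nlinarith [hsk]
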